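/- For positive integers n and t with t dividing n, the central multinomial coefficient satisfies C(n; n/t,...,n/t) ≤ √(t^t/(2π)^(t−1)) · n^(−(t−1)/2) · t^n. -/
import Mathlib

private lemma sqrt_pi_le_stirling' (m : ℕ) (hm : 0 < m) :
    Real.sqrt Real.pi ≤ Stirling.stirlingSeq m := by
  refine le_of_tendsto Stirling.tendsto_stirlingSeq_sqrt_pi
    (Filter.eventually_atTop.2 ⟨m, fun x hx => ?_⟩)
  obtain ⟨y, rfl⟩ : ∃ y, x = y + 1 := ⟨x-1, (Nat.succ_pred_eq_of_pos (by omega)).symm⟩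
  obtain ⟨z, rfl⟩ : ∃ z, m = z + 1 := ⟨m-1, (Nat.succ_pred_eq_of_pos hm).symm⟩
  exact Stirling.stirlingSeq'_antitone (by omega)

theorem stmt_11 (n t : ℕ) (hn : 0 < n) (ht : 0 < t) (hdvd : t ∣ n) :
    (Nat.factorial n : ℝ) / (Nat.factorial (n / t) : ℝ) ^ t ≤
      Real.sqrt ((t : ℝ) ^ t / (2 * Real.pi) ^ (t - 1)) *
        (n : ℝ) ^ (-((t : ℝ) - 1) / 2) * (t : ℝ) ^ n := by
  obtain ⟨k, rfl⟩ : ∃ k, t = k + 1 := ⟨t-1, (Nat.succ_pred_eq_of_pos ht).symm⟩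
  set m := n / (k + 1) with hmdef
  have hmt : m * (k + 1) = n := Nat.div_mul_cancel hdvd
  have hm : 0 < m := Nat.div_pos (Nat.le_of_dvd hn hdvd) ht
  have hmn : m ≤ n := Nat.div_le_self n (k + 1)
  set s : ℝ := Stirling.stirlingSeq m with hsdef
  set N : ℝ := ((n : ℕ) : ℝ) with hNdef
  set M : ℝ := ((m : ℕ) : ℝ) with hMdef
  set T : ℝ := ((k + 1 : ℕ) : ℝ) with hTdef
  set e : ℝ := Real.exp 1 with hedef
  have hN0 : 0 < N := by rw [hNdef]; exact_mod_cast hn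
  have hM0 : 0 < M := by rw [hMdef]; exact_mod_cast hm
  have hT0 : 0 < T := by rw [hTdef]; positivity
  have hNMT : N = M * T := by rw [hNdef, hMdef, hTdef, ← hmt]; push_cast; ring
  have he0 : 0 < e := Real.exp_pos 1
  have hs_pos : 0 < s := by
    obtain ⟨z, hz⟩ : ∃ z, m = z + 1 := ⟨m-1, (Nat.succ_pred_eq_of_pos hm).symm⟩
    rw [hsdef, hz]; exact Stirling.stirlingSeq'_pos z
  have hpi : Real.sqrt Real.pi ≤ s := sqrt_pi_le_stirling' m hm
  have hs2 : Real.pi ≤ s ^ 2 := by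
    calc Real.pi = Real.sqrt Real.pi ^ 2 := (Real.sq_sqrt Real.pi_pos.le).symm
    _ ≤ s ^ 2 := pow_le_pow_left₀ (Real.sqrt_nonneg _) hpi 2
  -- factorial formulas
  have hfm : (Nat.factorial m : ℝ) = s * (Real.sqrt (2 * M) * (M / e) ^ m) := by
    rw [hsdef, Stirling.stirlingSeq, hMdef, hedef]
    field_simp
  have hsn : Stirling.stirlingSeq n ≤ s := by
    obtain ⟨y, hy⟩ : ∃ y, n = y + 1 := ⟨n-1, (Nat.succ_pred_eq_of_pos hn).symm⟩
    obtain ⟨z, hz⟩ : ∃ z, m = z + 1 := ⟨m-1, (Nat.succ_pred_eq_of_pos hm).symm⟩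
    rw [hsdef, hy, hz]
    exact Stirling.stirlingSeq'_antitone (by omega : z ≤ y)
  have hfn : (Nat.factorial n : ℝ) ≤ s * (Real.sqrt (2 * N) * (N / e) ^ n) := by
    have h1 : (Nat.factorial n : ℝ) = Stirling.stirlingSeq n *
        (Real.sqrt (2 * N) * (N / e) ^ n) := by
      rw [Stirling.stirlingSeq, hNdef, hedef]
      field_simp
    rw [h1]
    exact mul_le_mul_of_nonneg_right hsn (by positivity)
  -- squared versions
  have hsq2N : Real.sqrt (2 * N) ^ 2 = 2 * N := Real.sq_sqrt (by positivity)
  have hsq2M : Real.sqrt (2 * M) ^ 2 = 2 * M := Real.sq_sqrt (by positivity)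
  have hfn2 : ((Nat.factorial n : ℝ)) ^ 2 ≤ s ^ 2 * (2 * N) * ((N / e) ^ 2) ^ n := by
    calc ((Nat.factorial n : ℝ)) ^ 2 ≤ (s * (Real.sqrt (2 * N) * (N / e) ^ n)) ^ 2 :=
          pow_le_pow_left₀ (by positivity) hfn 2
    _ = s ^ 2 * (Real.sqrt (2 * N) ^ 2) * ((N / e) ^ 2) ^ n := by ring
    _ = s ^ 2 * (2 * N) * ((N / e) ^ 2) ^ n := by rw [hsq2N]
  have hfm2 : (((Nat.factorial m : ℝ)) ^ (k + 1)) ^ 2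
      = (s ^ 2) ^ (k + 1) * (2 * M) ^ (k + 1) * ((M / e) ^ 2) ^ n := by
    calc (((Nat.factorial m : ℝ)) ^ (k + 1)) ^ 2
        = (s ^ 2) ^ (k + 1) * (Real.sqrt (2 * M) ^ 2) ^ (k + 1)
            * (((M / e) ^ 2) ^ m) ^ (k + 1) := by rw [hfm]; ring
      _ = (s ^ 2) ^ (k + 1) * (2 * M) ^ (k + 1) * ((M / e) ^ 2) ^ (m * (k + 1)) := by
          rw [hsq2M, ← pow_mul ((M / e) ^ 2) m (k + 1)]
      _ = (s ^ 2) ^ (k + 1) * (2 * M) ^ (k + 1) * ((M / e) ^ 2) ^ n := by rw [hmt]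
  -- RHS squared
  have hfm2pos : (0:ℝ) < (s ^ 2) ^ (k + 1) * (2 * M) ^ (k + 1) * ((M / e) ^ 2) ^ n := by
    positivity
  have hTk : T - 1 = (k : ℝ) := by rw [hTdef]; push_cast; ring
  set B : ℝ := Real.sqrt (T ^ (k + 1) / (2 * Real.pi) ^ (k + 1 - 1)) *
      N ^ (-(T - 1) / 2) * T ^ n with hBdef
  have hB0 : 0 ≤ B := by
    rw [hBdef]
    have h1 : (0:ℝ) ≤ N ^ (-(T - 1) / 2) := Real.rpow_nonneg hN0.le _
    positivity
  have hB2 : B ^ 2 = T ^ (k + 1) / (2 * Real.pi) ^ k * (N ^ k)⁻¹ * (T ^ n) ^ 2 := by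
    have hrp : (N ^ (-(T - 1) / 2)) ^ 2 = (N ^ k)⁻¹ := by
      rw [hTk, ← Real.rpow_natCast (N ^ (-(k : ℝ) / 2)) 2, ← Real.rpow_mul hN0.le]
      rw [show -(k:ℝ) / 2 * (2:ℕ) = -(k:ℝ) by push_cast; ring]
      rw [Real.rpow_neg hN0.le, Real.rpow_natCast]
    rw [hBdef, mul_pow, mul_pow, Real.sq_sqrt (by positivity), hrp]
    norm_num
  -- key inequality (squared)
  have hEq : s ^ 2 * (2 * N) * ((T ^ 2) ^ n)
      = (T ^ (k + 1) / (2 * Real.pi) ^ k * (N ^ k)⁻¹ * (T ^ n) ^ 2)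
          * ((s ^ 2 * Real.pi ^ k) * (2 * M) ^ (k + 1)) := by
    rw [hNMT]
    field_simp
    ring
  have hmono : s ^ 2 * Real.pi ^ k ≤ (s ^ 2) ^ (k + 1) := by
    calc s ^ 2 * Real.pi ^ k ≤ s ^ 2 * (s ^ 2) ^ k :=
          mul_le_mul_of_nonneg_left (pow_le_pow_left₀ Real.pi_pos.le hs2 k) (by positivity)
      _ = (s ^ 2) ^ (k + 1) := by ring
  have hkey : s ^ 2 * (2 * N) * ((T ^ 2) ^ n)
      ≤ (T ^ (k + 1) / (2 * Real.pi) ^ k * (N ^ k)⁻¹ * (T ^ n) ^ 2)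
          * ((s ^ 2) ^ (k + 1) * (2 * M) ^ (k + 1)) := by
    rw [hEq]
    have hC0 : (0:ℝ) ≤ T ^ (k + 1) / (2 * Real.pi) ^ k * (N ^ k)⁻¹ * (T ^ n) ^ 2 := by
      positivity
    refine mul_le_mul_of_nonneg_left ?_ hC0
    exact mul_le_mul_of_nonneg_right hmono (by positivity)
  -- assemble squared main inequality
  have hmain2 : ((Nat.factorial n : ℝ) / (Nat.factorial m : ℝ) ^ (k + 1)) ^ 2 ≤ B ^ 2 := by
    rw [div_pow, hB2, div_le_iff₀ (by rw [hfm2]; exact hfm2pos)]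
    calc ((Nat.factorial n : ℝ)) ^ 2 ≤ s ^ 2 * (2 * N) * ((N / e) ^ 2) ^ n := hfn2
      _ = (s ^ 2 * (2 * N) * ((T ^ 2) ^ n)) * ((M / e) ^ 2) ^ n := by
          rw [hNMT]
          rw [show ((M * T / e) ^ 2) ^ n = ((M / e) ^ 2) ^ n * (T ^ 2) ^ n by
            rw [← mul_pow, ← mul_pow]; congr 2; field_simp; try ring]
          ring
      _ ≤ ((T ^ (k + 1) / (2 * Real.pi) ^ k * (N ^ k)⁻¹ * (T ^ n) ^ 2)
            * ((s ^ 2) ^ (k + 1) * (2 * M) ^ (k + 1))) * ((M / e) ^ 2) ^ n :=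
          mul_le_mul_of_nonneg_right hkey (by positivity)
      _ = (T ^ (k + 1) / (2 * Real.pi) ^ k * (N ^ k)⁻¹ * (T ^ n) ^ 2)
            * ((s ^ 2) ^ (k + 1) * (2 * M) ^ (k + 1) * ((M / e) ^ 2) ^ n) := by ring
      _ = T ^ (k + 1) / (2 * Real.pi) ^ k * (N ^ k)⁻¹ * (T ^ n) ^ 2
            * ((Nat.factorial m : ℝ) ^ (k + 1)) ^ 2 := by rw [hfm2]
  -- remove the squares
  have hL0 : (0:ℝ) ≤ (Nat.factorial n : ℝ) / (Nat.factorial m : ℝ) ^ (k + 1) := by positivity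
  have hfin := Real.sqrt_le_sqrt hmain2
  rwa [Real.sqrt_sq hL0, Real.sqrt_sq hB0] at hfin
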